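/- Let a ∈ (0,1], b > 0, and define g(u) = u^{a-1} (1+u)^{-a} (1 + log(1+u))^{-(1+b)} for u > 0. Let π : (0,∞) → (0,∞) be measurable with (1/M) g(u) ≤ π(u) ≤ M g(u) for all u > 0 and some M > 0, and define f_π(y; z) = ∫₀^∞ π(u) · (e^z u)^y e^{-e^z u} / y! du. Then for every integer y ≥ 1 there exists a constant C > 0 such that for all z ∈ ℝ, f_π(y; z) ≤ C / (1 + |z|)^{1+b}. -/

import Mathlib

open MeasureTheory Set Filter

/-- The RSB-type reference density shape with `δ = 0`:
`g(u) = u^{a-1} (1+u)^{-a} (1+log(1+u))^{-(1+b)}`. -/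
noncomputable def gShape0 (a b u : ℝ) : ℝ :=
  u ^ (a - 1) * (1 + u) ^ (-a) * (1 + Real.log (1 + u)) ^ (-(1 + b))

/-- The Poisson mixture mass function
`f_π(y; z) = ∫₀^∞ π(u) (e^z u)^y e^{-e^z u} / y! du`. -/
noncomputable def poissonMix (p : ℝ → ℝ) (y : ℕ) (z : ℝ) : ℝ :=
  ∫ u in Set.Ioi (0 : ℝ),
    p u * ((Real.exp z * u) ^ y * Real.exp (-(Real.exp z * u)) / (Nat.factorial y : ℝ))

lemma aux_pow_le_factorial_mul_exp (n : ℕ) {t : ℝ} (ht : 0 ≤ t) :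
    t ^ n ≤ (n.factorial : ℝ) * Real.exp t := by
  have h := Real.pow_div_factorial_le_exp (x := t) ht n
  have hn : (0:ℝ) < n.factorial := by exact_mod_cast n.factorial_pos
  rw [div_le_iff₀ hn] at h
  calc t ^ n ≤ Real.exp t * n.factorial := h
    _ = (n.factorial : ℝ) * Real.exp t := by ring

/-- `t^(y+1) e^{-t} ≤ (y+1)!` for `t ≥ 0`. -/
lemma aux_kernel_bound (y : ℕ) {t : ℝ} (ht : 0 ≤ t) :
    t ^ y * Real.exp (-t) * t ≤ ((y+1).factorial : ℝ) := by
  have h := aux_pow_le_factorial_mul_exp (y+1) ht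
  have he : 0 < Real.exp t := Real.exp_pos t
  have heq : t ^ y * Real.exp (-t) * t = t ^ (y+1) * (Real.exp t)⁻¹ := by
    rw [Real.exp_neg]; ring
  rw [heq, mul_inv_le_iff₀ he]
  calc t ^ (y+1) ≤ ((y+1).factorial : ℝ) * Real.exp t := h
    _ = ((y+1).factorial : ℝ) * Real.exp t := by ring

/-- `t^y e^{-t} t^s ≤ (y+1)!` for `t ≥ 0`, `0 ≤ s ≤ 1`. -/
lemma aux_kernel_bound_rpow (y : ℕ) {s t : ℝ} (hs0 : 0 ≤ s) (hs1 : s ≤ 1) (ht : 0 ≤ t) :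
    t ^ y * Real.exp (-t) * t ^ s ≤ ((y+1).factorial : ℝ) := by
  have hfac : (1:ℝ) ≤ (y+1).factorial := by exact_mod_cast (y+1).factorial_pos
  rcases le_total t 1 with h1 | h1
  · have h2 : t ^ y ≤ 1 := pow_le_one₀ ht h1
    have h3 : t ^ s ≤ 1 := Real.rpow_le_one ht h1 hs0
    have h4 : Real.exp (-t) ≤ 1 := Real.exp_le_one_iff.mpr (by linarith)
    have h5 : (0:ℝ) ≤ t ^ s := Real.rpow_nonneg ht s
    have h6 : (0:ℝ) ≤ t ^ y := pow_nonneg ht y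
    have h7 : (0:ℝ) < Real.exp (-t) := Real.exp_pos _
    have hA : t ^ y * Real.exp (-t) ≤ 1 := mul_le_one₀ h2 h7.le h4
    have hB : t ^ y * Real.exp (-t) * t ^ s ≤ 1 :=
      mul_le_one₀ hA h5 h3
    linarith
  · have h3 : t ^ s ≤ t := by
      calc t ^ s ≤ t ^ (1:ℝ) := Real.rpow_le_rpow_of_exponent_le h1 hs1
        _ = t := Real.rpow_one t
    calc t ^ y * Real.exp (-t) * t ^ s ≤ t ^ y * Real.exp (-t) * t := by
          have := mul_nonneg (pow_nonneg ht y) (Real.exp_pos (-t)).le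
          exact mul_le_mul_of_nonneg_left h3 this
      _ ≤ _ := aux_kernel_bound y ht

/-- `(1+t)^(1+b) ≤ ε^(-(1+b)) * exp(ε (1+b) t)` for `t ≥ 0`, `0 < ε ≤ 1`. -/
lemma aux_poly_le_exp {b ε t : ℝ} (hb : 0 < b) (hε0 : 0 < ε) (hε1 : ε ≤ 1) (ht : 0 ≤ t) :
    (1 + t) ^ (1+b) ≤ ε ^ (-(1+b)) * Real.exp (ε * (1+b) * t) := by
  have h1 : 1 + t ≤ ε⁻¹ * Real.exp (ε * t) := by
    have h2 : ε * t + 1 ≤ Real.exp (ε * t) := Real.add_one_le_exp _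
    calc 1 + t ≤ ε⁻¹ * (ε * t + 1) := by
          have h3 : ε * (1 + t) ≤ ε * t + 1 := by nlinarith
          calc 1 + t = ε⁻¹ * (ε * (1+t)) := by field_simp
            _ ≤ ε⁻¹ * (ε * t + 1) :=
              mul_le_mul_of_nonneg_left h3 (inv_nonneg.mpr hε0.le)
      _ ≤ ε⁻¹ * Real.exp (ε * t) :=
          mul_le_mul_of_nonneg_left h2 (inv_nonneg.mpr hε0.le)
  have hbase : (0:ℝ) ≤ 1 + t := by linarith
  have hexp : (0:ℝ) ≤ 1 + b := by linarith
  calc (1 + t) ^ (1+b) ≤ (ε⁻¹ * Real.exp (ε * t)) ^ (1+b) :=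
        Real.rpow_le_rpow hbase h1 hexp
    _ = (ε⁻¹) ^ (1+b) * (Real.exp (ε * t)) ^ (1+b) :=
        Real.mul_rpow (inv_nonneg.mpr hε0.le) (Real.exp_pos _).le
    _ = ε ^ (-(1+b)) * Real.exp (ε * (1+b) * t) := by
        rw [Real.rpow_neg hε0.le, ← Real.inv_rpow hε0.le, ← Real.exp_mul]
        ring_nf


section gsh
variable {a b u : ℝ} (ha0 : 0 < a) (ha1 : a ≤ 1) (hb : 0 < b) (hu : 0 < u)
include hu

lemma aux_log_pos : (0:ℝ) < 1 + Real.log (1 + u) := by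
  have : (0:ℝ) ≤ Real.log (1 + u) := Real.log_nonneg (by linarith)
  linarith

lemma gShape0_pos : 0 < gShape0 a b u := by
  have h1 : 0 < u ^ (a-1) := Real.rpow_pos_of_pos hu _
  have h2 : 0 < (1+u) ^ (-a) := Real.rpow_pos_of_pos (by linarith) _
  have h3 : 0 < (1 + Real.log (1+u)) ^ (-(1+b)) := Real.rpow_pos_of_pos (aux_log_pos hu) _
  exact mul_pos (mul_pos h1 h2) h3

include ha0 hb in
lemma gShape0_le_rpow : gShape0 a b u ≤ u ^ (a - 1) := by
  have h1 : 0 < u ^ (a-1) := Real.rpow_pos_of_pos hu _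
  have h2 : (1+u) ^ (-a) ≤ 1 :=
    Real.rpow_le_one_of_one_le_of_nonpos (by linarith) (by linarith)
  have h2' : 0 < (1+u) ^ (-a) := Real.rpow_pos_of_pos (by linarith) _
  have h3 : (1 + Real.log (1+u)) ^ (-(1+b)) ≤ 1 := by
    have : (0:ℝ) ≤ Real.log (1 + u) := Real.log_nonneg (by linarith)
    exact Real.rpow_le_one_of_one_le_of_nonpos (by linarith) (by linarith)
  have h3' : 0 < (1 + Real.log (1+u)) ^ (-(1+b)) := Real.rpow_pos_of_pos (aux_log_pos hu) _
  calc gShape0 a b u ≤ u ^ (a-1) * (1+u) ^ (-a) * 1 := by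
        unfold gShape0
        exact mul_le_mul_of_nonneg_left h3 (by positivity)
    _ ≤ u ^ (a-1) * 1 * 1 := by
        have := mul_le_mul_of_nonneg_left h2 h1.le
        nlinarith
    _ = u ^ (a-1) := by ring

include ha0 in
/-- `u^(a-1) (1+u)^(-a) * u ≤ 1`. -/
lemma aux_core_le_one : u ^ (a-1) * (1+u) ^ (-a) * u ≤ 1 := by
  have h1 : u ^ (a-1) * u = u ^ a := by
    nth_rewrite 2 [← Real.rpow_one u]
    rw [← Real.rpow_add hu]
    norm_num
  have h2 : u ^ a ≤ (1+u) ^ a := Real.rpow_le_rpow hu.le (by linarith) ha0.le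
  have h3 : (1+u) ^ (-a) = ((1+u) ^ a)⁻¹ := Real.rpow_neg (by linarith) a
  have h4 : 0 < (1+u) ^ a := Real.rpow_pos_of_pos (by linarith) a
  calc u ^ (a-1) * (1+u) ^ (-a) * u = (u ^ (a-1) * u) * (1+u) ^ (-a) := by ring
    _ = (u ^ a) * ((1+u) ^ a)⁻¹ := by rw [h1, h3]
    _ ≤ 1 := by
        rw [← div_eq_mul_inv, div_le_one h4]; exact h2

include ha0 hb in
lemma gShape0_mul_le_one : gShape0 a b u * u ≤ 1 := by
  have h3 : (1 + Real.log (1+u)) ^ (-(1+b)) ≤ 1 := by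
    have : (0:ℝ) ≤ Real.log (1 + u) := Real.log_nonneg (by linarith)
    exact Real.rpow_le_one_of_one_le_of_nonpos (by linarith) (by linarith)
  have h3' : 0 < (1 + Real.log (1+u)) ^ (-(1+b)) := Real.rpow_pos_of_pos (aux_log_pos hu) _
  have hcore : 0 ≤ u ^ (a-1) * (1+u) ^ (-a) * u := by positivity
  have h := aux_core_le_one ha0 hu
  calc gShape0 a b u * u
      = (u ^ (a-1) * (1+u) ^ (-a) * u) * ((1 + Real.log (1+u)) ^ (-(1+b))) := by
        unfold gShape0; ring
    _ ≤ 1 := mul_le_one₀ h h3'.le h3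

include ha0 in
lemma gShape0_le_inv_mul :
    gShape0 a b u ≤ u⁻¹ * (1 + Real.log (1 + u)) ^ (-(1 + b)) := by
  have h3' : 0 < (1 + Real.log (1+u)) ^ (-(1+b)) := Real.rpow_pos_of_pos (aux_log_pos hu) _
  have h := aux_core_le_one ha0 hu
  have hcore : u ^ (a-1) * (1+u) ^ (-a) ≤ u⁻¹ := by
    rw [← mul_le_mul_iff_of_pos_right hu, inv_mul_cancel₀ hu.ne']
    exact h
  calc gShape0 a b u = (u ^ (a-1) * (1+u) ^ (-a)) * (1 + Real.log (1+u)) ^ (-(1+b)) := rfl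
    _ ≤ u⁻¹ * (1 + Real.log (1+u)) ^ (-(1+b)) :=
        mul_le_mul_of_nonneg_right hcore h3'.le

end gsh



set_option maxHeartbeats 2000000 in
/-- If `p` is comparable to the RSB-type shape `gShape0 a b`, then for each fixed
`y ≥ 1` the Poisson mixture mass `f_p(y; z)` decays at least like `(1+|z|)^{-(1+b)}`. -/
theorem poissonMix_decay_bound (a b M : ℝ) (ha : a ∈ Set.Ioc (0 : ℝ) 1)
    (hb : 0 < b) (hM : 0 < M) (p : ℝ → ℝ) (hmeas : Measurable p)
    (hlow : ∀ u : ℝ, 0 < u → gShape0 a b u / M ≤ p u)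
    (hup : ∀ u : ℝ, 0 < u → p u ≤ M * gShape0 a b u) :
    ∀ y : ℕ, 1 ≤ y → ∃ C : ℝ, 0 < C ∧ ∀ z : ℝ,
      poissonMix p y z ≤ C / (1 + |z|) ^ (1 + b) := by
  obtain ⟨ha0, ha1⟩ := ha
  intro y hy
  have hyfac : (0:ℝ) < y.factorial := by exact_mod_cast y.factorial_pos
  set S : ℝ := ((y+1).factorial : ℝ) with hSdef
  have hS1 : (1:ℝ) ≤ S := by
    have h : 1 ≤ (y+1).factorial := (y+1).factorial_pos
    rw [hSdef]; exact_mod_cast h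
  have hS0 : (0:ℝ) < S := by linarith
  have hb1 : (0:ℝ) < 1 + b := by linarith
  set ε : ℝ := a / (2*(1+b)) with hεdef
  have hε0 : 0 < ε := by positivity
  have hε1 : ε ≤ 1 := by
    rw [hεdef, div_le_one (by positivity)]; nlinarith
  set η : ℝ := 1 / (2*(1+b)) with hηdef
  have hη0 : 0 < η := by positivity
  have hη1 : η ≤ 1 := by
    rw [hηdef, div_le_one (by positivity)]; nlinarith
  set D : ℝ := M * S / y.factorial with hDdef
  have hD0 : 0 < D := by positivity
  set C1 : ℝ := D * (2/a + 1) * ε ^ (-(1+b)) with hC1def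
  set C2 : ℝ := (M / y.factorial) * η ^ (-(1+b)) with hC2def
  set C3 : ℝ := (M / y.factorial) * (1 + S) * (2:ℝ) ^ (1+b) with hC3def
  have hC1 : 0 < C1 := by
    have := Real.rpow_pos_of_pos hε0 (-(1+b)); positivity
  have hC2 : 0 < C2 := by
    have := Real.rpow_pos_of_pos hη0 (-(1+b)); positivity
  have hC3 : 0 < C3 := by
    have := Real.rpow_pos_of_pos (show (0:ℝ) < 2 by norm_num) (1+b); positivity
  refine ⟨C1 + C2 + C3, by linarith, ?_⟩
  intro z
  set c : ℝ := Real.exp z with hcdef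
  have hc0 : 0 < c := Real.exp_pos z
  set k : ℝ → ℝ := fun u => (c*u)^y * Real.exp (-(c*u)) with hkdef
  set F : ℝ → ℝ := fun u => p u * (k u / (y.factorial : ℝ)) with hFdef
  have hpm : poissonMix p y z = ∫ u in Ioi (0:ℝ), F u := rfl
  have hknn : ∀ u : ℝ, 0 < u → 0 ≤ k u := by
    intro u hu
    have : 0 < c*u := mul_pos hc0 hu
    have := Real.exp_pos (-(c*u))
    positivity
  have hgpos : ∀ u : ℝ, 0 < u → 0 < gShape0 a b u := fun u hu => gShape0_pos hu
  have hpnn : ∀ u : ℝ, 0 < u → 0 ≤ p u := by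
    intro u hu
    have h1 : 0 < gShape0 a b u / M := div_pos (hgpos u hu) hM
    linarith [hlow u hu]
  have hFnn : ∀ u : ℝ, 0 < u → 0 ≤ F u := by
    intro u hu
    exact mul_nonneg (hpnn u hu) (div_nonneg (hknn u hu) hyfac.le)
  have hFle : ∀ u : ℝ, 0 < u → ∀ B : ℝ, gShape0 a b u * k u ≤ B →
      F u ≤ (M / y.factorial) * B := by
    intro u hu B hB
    have h1 : F u = (p u * k u) / y.factorial := by rw [hFdef]; ring
    have h2 : p u * k u ≤ M * (gShape0 a b u * k u) := by
      have := mul_le_mul_of_nonneg_right (hup u hu) (hknn u hu)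
      calc p u * k u ≤ M * gShape0 a b u * k u := this
        _ = M * (gShape0 a b u * k u) := by ring
    have h3 : p u * k u ≤ M * B :=
      h2.trans (mul_le_mul_of_nonneg_left hB hM.le)
    rw [h1]
    calc p u * k u / y.factorial ≤ (M * B) / y.factorial := by
          gcongr
      _ = (M / y.factorial) * B := by ring
  have hFmeas : Measurable F := by
    apply hmeas.mul
    apply Measurable.div_const
    apply Measurable.mul
    · exact (measurable_const.mul measurable_id).pow_const y
    · exact ((measurable_const.mul measurable_id).neg).exp
  have hint : ∀ (s : Set ℝ), MeasurableSet s → s ⊆ Ioi 0 → ∀ Φ : ℝ → ℝ,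
      IntegrableOn Φ s → (∀ u ∈ s, F u ≤ Φ u) →
      IntegrableOn F s ∧ ∫ u in s, F u ≤ ∫ u in s, Φ u := by
    intro s hs hsub Φ hΦ hle
    have hFi : IntegrableOn F s := by
      refine hΦ.mono' hFmeas.aestronglyMeasurable ?_
      rw [ae_restrict_iff' hs]
      refine ae_of_all _ fun u hu => ?_
      rw [Real.norm_eq_abs, abs_of_nonneg (hFnn u (hsub hu))]
      exact hle u hu
    exact ⟨hFi, setIntegral_mono_on hFi hΦ hs hle⟩
  rcases le_or_gt 0 z with hz | hz
  -- CASE z ≥ 0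
  · have hc1 : 1 ≤ c := Real.one_le_exp hz
    set Φ1 : ℝ → ℝ := fun u => (D * c ^ (-(a/2))) * u ^ (a/2 - 1) with hΦ1def
    set Φ2 : ℝ → ℝ := fun u => (D * c⁻¹) * u ^ (-2:ℝ) with hΦ2def
    have hbd1 : ∀ u ∈ Ioc (0:ℝ) 1, F u ≤ Φ1 u := by
      intro u hu
      have hu0 : 0 < u := hu.1
      have hcu : 0 < c*u := mul_pos hc0 hu0
      have hkb : k u ≤ S * (c*u) ^ (-(a/2)) := by
        have h := aux_kernel_bound_rpow y (by positivity : (0:ℝ) ≤ a/2)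
          (by linarith : a/2 ≤ 1) hcu.le
        have heq : k u = ((c*u)^y * Real.exp (-(c*u)) * (c*u) ^ (a/2)) * (c*u) ^ (-(a/2)) := by
          rw [hkdef]
          rw [mul_assoc, ← Real.rpow_add hcu]
          norm_num
        rw [heq]
        exact mul_le_mul_of_nonneg_right h (Real.rpow_nonneg hcu.le _)
      have hgb : gShape0 a b u ≤ u ^ (a-1) := gShape0_le_rpow ha0 hb hu0
      have hB : gShape0 a b u * k u ≤ S * c ^ (-(a/2)) * u ^ (a/2-1) := by
        calc gShape0 a b u * k u ≤ u ^ (a-1) * (S * (c*u) ^ (-(a/2))) :=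
              mul_le_mul hgb hkb (hknn u hu0) (Real.rpow_nonneg hu0.le _)
          _ = S * c ^ (-(a/2)) * (u ^ (a-1) * u ^ (-(a/2))) := by
              rw [Real.mul_rpow hc0.le hu0.le]; ring
          _ = S * c ^ (-(a/2)) * u ^ (a/2-1) := by
              rw [← Real.rpow_add hu0]
              ring_nf
      have := hFle u hu0 _ hB
      calc F u ≤ (M / y.factorial) * (S * c ^ (-(a/2)) * u ^ (a/2-1)) := this
        _ = Φ1 u := by rw [hΦ1def, hDdef]; ring
    have hbd2 : ∀ u ∈ Ioi (1:ℝ), F u ≤ Φ2 u := by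
      intro u hu
      have hu0 : (0:ℝ) < u := lt_trans zero_lt_one hu
      have hcu : 0 < c*u := mul_pos hc0 hu0
      have hkb : k u ≤ S * (c⁻¹ * u⁻¹) := by
        have h := aux_kernel_bound y hcu.le
        have h2 : k u * (c*u) ≤ S := h
        rw [← le_div_iff₀ hcu] at h2
        calc k u ≤ S / (c*u) := h2
          _ = S * (c⁻¹ * u⁻¹) := by rw [div_eq_mul_inv, mul_inv]
      have hgb : gShape0 a b u ≤ u⁻¹ * (1 + Real.log (1+u)) ^ (-(1+b)) :=
        gShape0_le_inv_mul ha0 hu0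
      have hlog1 : (1 + Real.log (1+u)) ^ (-(1+b)) ≤ 1 := by
        have : (0:ℝ) ≤ Real.log (1 + u) := Real.log_nonneg (by linarith)
        exact Real.rpow_le_one_of_one_le_of_nonpos (by linarith) (by linarith)
      have hgb2 : gShape0 a b u ≤ u⁻¹ := by
        have h2 : u⁻¹ * (1 + Real.log (1+u)) ^ (-(1+b)) ≤ u⁻¹ * 1 :=
          mul_le_mul_of_nonneg_left hlog1 (inv_nonneg.mpr hu0.le)
        calc gShape0 a b u ≤ u⁻¹ * (1 + Real.log (1+u)) ^ (-(1+b)) := hgb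
          _ ≤ u⁻¹ * 1 := h2
          _ = u⁻¹ := by ring
      have hB : gShape0 a b u * k u ≤ S * c⁻¹ * u ^ (-2:ℝ) := by
        have hinv2 : u⁻¹ * u⁻¹ = u ^ (-2:ℝ) := by
          have h1 : u ^ (-2:ℝ) = (u ^ (2:ℕ) : ℝ)⁻¹ := by
            rw [← Real.rpow_natCast u 2, ← Real.rpow_neg hu0.le]; norm_num
          rw [h1, pow_two, mul_inv]
        calc gShape0 a b u * k u ≤ u⁻¹ * (S * (c⁻¹ * u⁻¹)) :=
              mul_le_mul hgb2 hkb (hknn u hu0) (inv_nonneg.mpr hu0.le)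
          _ = S * c⁻¹ * (u⁻¹ * u⁻¹) := by ring
          _ = S * c⁻¹ * u ^ (-2:ℝ) := by rw [hinv2]
      have := hFle u hu0 _ hB
      calc F u ≤ (M / y.factorial) * (S * c⁻¹ * u ^ (-2:ℝ)) := this
        _ = Φ2 u := by rw [hΦ2def, hDdef]; ring
    have hΦ1i : IntegrableOn Φ1 (Ioc (0:ℝ) 1) := by
      have h := (intervalIntegral.intervalIntegrable_rpow'
        (show (-1:ℝ) < a/2-1 by linarith) (a := 0) (b := 1)).1
      exact h.const_mul _
    have hΦ2i : IntegrableOn Φ2 (Ioi (1:ℝ)) := by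
      have h := integrableOn_Ioi_rpow_of_lt (show (-2:ℝ) < -1 by norm_num) zero_lt_one
      exact h.const_mul _
    obtain ⟨hFi1, hle1⟩ := hint (Ioc 0 1) measurableSet_Ioc Ioc_subset_Ioi_self Φ1 hΦ1i hbd1
    obtain ⟨hFi2, hle2⟩ := hint (Ioi 1) measurableSet_Ioi
      (Ioi_subset_Ioi zero_le_one) Φ2 hΦ2i hbd2
    have hsplit : ∫ u in Ioi (0:ℝ), F u = (∫ u in Ioc (0:ℝ) 1, F u) + ∫ u in Ioi (1:ℝ), F u := by
      rw [← setIntegral_union (Ioc_disjoint_Ioi le_rfl) measurableSet_Ioi hFi1 hFi2,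
        Ioc_union_Ioi_eq_Ioi zero_le_one]
    have hI1 : ∫ u in Ioc (0:ℝ) 1, Φ1 u = (D * c ^ (-(a/2))) * (2/a) := by
      rw [hΦ1def]
      rw [integral_const_mul]
      congr 1
      rw [← intervalIntegral.integral_of_le zero_le_one,
        integral_rpow (Or.inl (by linarith : (-1:ℝ) < a/2-1))]
      have h2 : a/2 - 1 + 1 = a/2 := by ring
      rw [h2, Real.one_rpow, Real.zero_rpow (by positivity : (a/2 : ℝ) ≠ 0)]
      field_simp
      norm_num
    have hI2 : ∫ u in Ioi (1:ℝ), Φ2 u = D * c⁻¹ := by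
      rw [hΦ2def, integral_const_mul,
        integral_Ioi_rpow_of_lt (show (-2:ℝ) < -1 by norm_num) zero_lt_one]
      norm_num [Real.one_rpow]
    have htot : poissonMix p y z ≤ D * (2/a + 1) * c ^ (-(a/2)) := by
      have hcc : c⁻¹ ≤ c ^ (-(a/2)) := by
        rw [← Real.rpow_neg_one c]
        exact Real.rpow_le_rpow_of_exponent_le hc1 (by linarith)
      calc poissonMix p y z = (∫ u in Ioc (0:ℝ) 1, F u) + ∫ u in Ioi (1:ℝ), F u := by
            rw [hpm, hsplit]
        _ ≤ (D * c ^ (-(a/2))) * (2/a) + D * c⁻¹ := by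
            rw [← hI1, ← hI2]; exact add_le_add hle1 hle2
        _ ≤ (D * c ^ (-(a/2))) * (2/a) + D * c ^ (-(a/2)) := by
            have := mul_le_mul_of_nonneg_left hcc hD0.le
            linarith
        _ = D * (2/a + 1) * c ^ (-(a/2)) := by ring
    have hpow : (0:ℝ) < (1 + |z|) ^ (1+b) :=
      Real.rpow_pos_of_pos (by positivity) _
    rw [le_div_iff₀ hpow]
    rw [abs_of_nonneg hz]
    have hpoly := aux_poly_le_exp hb hε0 hε1 hz
    have hXnn : (0:ℝ) ≤ D * (2/a + 1) * c ^ (-(a/2)) := by positivity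
    calc poissonMix p y z * (1+z) ^ (1+b)
        ≤ (D * (2/a+1) * c ^ (-(a/2))) * (1+z) ^ (1+b) := by
          apply mul_le_mul_of_nonneg_right htot (Real.rpow_nonneg (by linarith) _)
      _ ≤ (D * (2/a+1) * c ^ (-(a/2))) * (ε ^ (-(1+b)) * Real.exp (ε * (1+b) * z)) :=
          mul_le_mul_of_nonneg_left hpoly hXnn
      _ = D * (2/a+1) * ε ^ (-(1+b)) *
            (c ^ (-(a/2)) * Real.exp (ε * (1+b) * z)) := by ring
      _ = C1 := by
          have hce : c ^ (-(a/2)) = Real.exp (z * (-(a/2))) := by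
            rw [hcdef, Real.exp_mul]
          rw [hce, ← Real.exp_add]
          have heps : z * (-(a/2)) + ε * (1+b) * z = 0 := by
            rw [hεdef]; field_simp; ring
          rw [heps, Real.exp_zero, hC1def]; ring
      _ ≤ C1 + C2 + C3 := by linarith
  -- CASE z < 0

  · have hzneg : z < 0 := hz
    set U : ℝ := Real.exp (-z/2) with hUdef
    set V : ℝ := Real.exp (-z) with hVdef
    have hU0 : 0 < U := Real.exp_pos _
    have hV0 : 0 < V := Real.exp_pos _
    have hUV : U < V := by rw [hUdef, hVdef]; exact Real.exp_lt_exp.mpr (by linarith)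
    have hcU : c * U = Real.exp (z/2) := by
      rw [hcdef, hUdef, ← Real.exp_add]; congr 1; ring
    have hcV : c * V = 1 := by
      rw [hcdef, hVdef, ← Real.exp_add]; simp
    have hcU1 : c * U ≤ 1 := by
      rw [hcU]; exact Real.exp_le_one_iff.mpr (by linarith)
    set L : ℝ := (1 - z/2) ^ (-(1+b)) with hLdef
    have h1z : (0:ℝ) < 1 - z/2 := by linarith
    have hL0 : 0 < L := Real.rpow_pos_of_pos h1z _
    have hglog : ∀ u : ℝ, U ≤ u → 0 < u → gShape0 a b u ≤ u⁻¹ * L := by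
      intro u hUu hu0
      refine (gShape0_le_inv_mul ha0 hu0).trans ?_
      apply mul_le_mul_of_nonneg_left _ (inv_nonneg.mpr hu0.le)
      apply Real.rpow_le_rpow_of_nonpos h1z _ (by linarith)
      have hlog : Real.log U ≤ Real.log (1+u) := Real.log_le_log hU0 (by linarith)
      rw [hUdef, Real.log_exp] at hlog
      linarith
    have hkle : ∀ u : ℝ, 0 < u → c*u ≤ 1 → k u ≤ c*u := by
      intro u hu0 hcu1
      have hcu0 : 0 < c*u := mul_pos hc0 hu0
      calc k u = (c*u)^y * Real.exp (-(c*u)) := rfl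
        _ ≤ (c*u)^y * 1 := by
            apply mul_le_mul_of_nonneg_left _ (pow_nonneg hcu0.le y)
            exact Real.exp_le_one_iff.mpr (by linarith)
        _ = (c*u)^y := mul_one _
        _ ≤ c*u := pow_le_of_le_one hcu0.le hcu1 (by omega)
    have hkS : ∀ u : ℝ, 0 < u → k u ≤ S * (c⁻¹ * u⁻¹) := by
      intro u hu0
      have hcu : 0 < c*u := mul_pos hc0 hu0
      have h2 : k u * (c*u) ≤ S := aux_kernel_bound y hcu.le
      rw [← le_div_iff₀ hcu] at h2
      calc k u ≤ S / (c*u) := h2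
        _ = S * (c⁻¹ * u⁻¹) := by rw [div_eq_mul_inv, mul_inv]
    set Φ3 : ℝ → ℝ := fun u => ((M/(y.factorial:ℝ)) * (L*S*c⁻¹)) * u^(-2:ℝ) with hΦ3def
    have hbd1 : ∀ u ∈ Ioc (0:ℝ) U, F u ≤ (M / (y.factorial:ℝ)) * c := by
      intro u hu
      have hu0 : 0 < u := hu.1
      have hcu1 : c*u ≤ 1 := by
        have h := mul_le_mul_of_nonneg_left hu.2 hc0.le
        linarith
      apply hFle u hu0
      calc gShape0 a b u * k u ≤ gShape0 a b u * (c*u) :=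
            mul_le_mul_of_nonneg_left (hkle u hu0 hcu1) (hgpos u hu0).le
        _ = c * (gShape0 a b u * u) := by ring
        _ ≤ c * 1 := mul_le_mul_of_nonneg_left (gShape0_mul_le_one ha0 hb hu0) hc0.le
        _ = c := mul_one c
    have hbd2 : ∀ u ∈ Ioc U V, F u ≤ (M / (y.factorial:ℝ)) * (L * c) := by
      intro u hu
      have hu0 : 0 < u := hU0.trans hu.1
      have hcu1 : c*u ≤ 1 := by
        have h := mul_le_mul_of_nonneg_left hu.2 hc0.le
        rw [hcV] at h; exact h
      apply hFle u hu0
      calc gShape0 a b u * k u ≤ (u⁻¹ * L) * (c*u) :=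
            mul_le_mul (hglog u hu.1.le hu0) (hkle u hu0 hcu1) (hknn u hu0) (by positivity)
        _ = (L * c) * (u⁻¹ * u) := by ring
        _ = L * c := by rw [inv_mul_cancel₀ hu0.ne', mul_one]
    have hbd3 : ∀ u ∈ Ioi V, F u ≤ Φ3 u := by
      intro u hu
      have hu0 : 0 < u := hV0.trans hu
      have hinv2 : u⁻¹ * u⁻¹ = u ^ (-2:ℝ) := by
        have h1 : u ^ (-2:ℝ) = (u ^ (2:ℕ) : ℝ)⁻¹ := by
          rw [← Real.rpow_natCast u 2, ← Real.rpow_neg hu0.le]; norm_num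
        rw [h1, pow_two, mul_inv]
      have hB : gShape0 a b u * k u ≤ L*S*c⁻¹ * u^(-2:ℝ) := by
        calc gShape0 a b u * k u ≤ (u⁻¹ * L) * (S * (c⁻¹ * u⁻¹)) :=
              mul_le_mul (hglog u (hUV.le.trans hu.le) hu0) (hkS u hu0)
                (hknn u hu0) (by positivity)
          _ = L*S*c⁻¹ * (u⁻¹ * u⁻¹) := by ring
          _ = L*S*c⁻¹ * u^(-2:ℝ) := by rw [hinv2]
      calc F u ≤ (M / (y.factorial:ℝ)) * (L*S*c⁻¹ * u^(-2:ℝ)) := hFle u hu0 _ hB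
        _ = Φ3 u := by rw [hΦ3def]; ring
    obtain ⟨hFi1, hle1⟩ := hint (Ioc 0 U) measurableSet_Ioc Ioc_subset_Ioi_self
      (fun _ => (M / (y.factorial:ℝ)) * c)
      ((integrableOn_const_iff).mpr (Or.inr measure_Ioc_lt_top)) hbd1
    obtain ⟨hFi2, hle2⟩ := hint (Ioc U V) measurableSet_Ioc
      (fun u hu => hU0.trans hu.1)
      (fun _ => (M / (y.factorial:ℝ)) * (L * c))
      ((integrableOn_const_iff).mpr (Or.inr measure_Ioc_lt_top)) hbd2
    obtain ⟨hFi3, hle3⟩ := hint (Ioi V) measurableSet_Ioi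
      (fun u hu => hV0.trans hu) Φ3
      ((integrableOn_Ioi_rpow_of_lt (show (-2:ℝ) < -1 by norm_num) hV0).const_mul _) hbd3
    have hsplit : ∫ u in Ioi (0:ℝ), F u =
        ((∫ u in Ioc (0:ℝ) U, F u) + ∫ u in Ioc U V, F u) + ∫ u in Ioi V, F u := by
      have h12 : IntegrableOn F (Ioc (0:ℝ) V) := by
        rw [← Ioc_union_Ioc_eq_Ioc hU0.le hUV.le]
        exact hFi1.union hFi2
      rw [← setIntegral_union (Ioc_disjoint_Ioc_of_le le_rfl) measurableSet_Ioc hFi1 hFi2,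
        Ioc_union_Ioc_eq_Ioc hU0.le hUV.le,
        ← setIntegral_union (Ioc_disjoint_Ioi le_rfl) measurableSet_Ioi h12 hFi3,
        Ioc_union_Ioi_eq_Ioi hV0.le]
    have hI1 : ∫ _u in Ioc (0:ℝ) U, ((M / (y.factorial:ℝ)) * c) =
        (M / (y.factorial:ℝ)) * Real.exp (z/2) := by
      rw [setIntegral_const, measureReal_def, Real.volume_Ioc, smul_eq_mul,
        ENNReal.toReal_ofReal (by linarith : (0:ℝ) ≤ U - 0), sub_zero]
      calc U * ((M/(y.factorial:ℝ))*c) = (M/(y.factorial:ℝ)) * (c*U) := by ring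
        _ = _ := by rw [hcU]
    have hI2 : ∫ _u in Ioc U V, ((M / (y.factorial:ℝ)) * (L * c)) ≤
        (M / (y.factorial:ℝ)) * L := by
      rw [setIntegral_const, measureReal_def, Real.volume_Ioc, smul_eq_mul,
        ENNReal.toReal_ofReal (by linarith : (0:ℝ) ≤ V - U)]
      have hc1 : c * (V - U) ≤ 1 := by
        have h0 : 0 ≤ c * U := (mul_pos hc0 hU0).le
        have he : c * (V - U) = 1 - c * U := by rw [mul_sub, hcV]
        linarith
      calc (V - U) * ((M/(y.factorial:ℝ)) * (L*c))
          = ((M/(y.factorial:ℝ)) * L) * (c * (V - U)) := by ring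
        _ ≤ ((M/(y.factorial:ℝ)) * L) * 1 :=
            mul_le_mul_of_nonneg_left hc1 (by positivity)
        _ = (M/(y.factorial:ℝ)) * L := mul_one _
    have hVinv : V⁻¹ = c := by
      rw [hVdef, hcdef, ← Real.exp_neg]; norm_num
    have hI3 : ∫ u in Ioi V, Φ3 u = (M / (y.factorial:ℝ)) * (L * S) := by
      rw [hΦ3def, integral_const_mul,
        integral_Ioi_rpow_of_lt (show (-2:ℝ) < -1 by norm_num) hV0]
      norm_num
      rw [Real.rpow_neg_one, hVinv]
      field_simp
    have htot : poissonMix p y z ≤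
        (M/(y.factorial:ℝ)) * Real.exp (z/2) + (M/(y.factorial:ℝ)) * ((1+S) * L) := by
      rw [hpm, hsplit]
      have h1 := hle1.trans_eq hI1
      have h2 := hle2.trans hI2
      have h3 := hle3.trans_eq hI3
      have : (M/(y.factorial:ℝ)) * L + (M/(y.factorial:ℝ)) * (L * S)
          = (M/(y.factorial:ℝ)) * ((1+S) * L) := by ring
      linarith
    have hpow : (0:ℝ) < (1 + |z|) ^ (1+b) :=
      Real.rpow_pos_of_pos (by positivity) _
    rw [le_div_iff₀ hpow, abs_of_neg hzneg]
    have hP0 : (0:ℝ) ≤ (1 + -z) ^ (1+b) := Real.rpow_nonneg (by linarith) _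
    have hterm1 : Real.exp (z/2) * (1 + -z) ^ (1+b) ≤ η ^ (-(1+b)) := by
      have hpoly := aux_poly_le_exp hb hη0 hη1 (show (0:ℝ) ≤ -z by linarith)
      calc Real.exp (z/2) * (1 + -z) ^ (1+b)
          ≤ Real.exp (z/2) * (η ^ (-(1+b)) * Real.exp (η * (1+b) * -z)) :=
            mul_le_mul_of_nonneg_left hpoly (Real.exp_pos _).le
        _ = η ^ (-(1+b)) * (Real.exp (z/2) * Real.exp (η * (1+b) * -z)) := by ring
        _ = η ^ (-(1+b)) := by
            rw [← Real.exp_add]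
            have hzz : z/2 + η * (1+b) * -z = 0 := by
              rw [hηdef]; field_simp; ring
            rw [hzz, Real.exp_zero, mul_one]
    have hterm2 : L * (1 + -z) ^ (1+b) ≤ (2:ℝ) ^ (1+b) := by
      have h1 : (1 + -z)/2 ≤ 1 - z/2 := by linarith
      have h2 : L ≤ ((1 + -z)/2) ^ (-(1+b)) := by
        rw [hLdef]
        exact Real.rpow_le_rpow_of_nonpos (by linarith) h1 (by linarith)
      have h3 : ((1 + -z)/2) ^ (-(1+b)) = (1 + -z) ^ (-(1+b)) * (2:ℝ) ^ (1+b) := by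
        rw [Real.div_rpow (by linarith : (0:ℝ) ≤ 1 + -z) (by norm_num : (0:ℝ) ≤ 2),
          Real.rpow_neg (show (0:ℝ) ≤ 2 by norm_num) (1+b), div_eq_mul_inv, inv_inv]
      have h4 : (1 + -z) ^ (-(1+b)) * (1 + -z) ^ (1+b) = 1 := by
        rw [← Real.rpow_add (by linarith : (0:ℝ) < 1 + -z),
          show -(1+b) + (1+b) = (0:ℝ) by ring, Real.rpow_zero]
      calc L * (1 + -z) ^ (1+b) ≤ ((1 + -z)/2) ^ (-(1+b)) * (1 + -z) ^ (1+b) :=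
            mul_le_mul_of_nonneg_right h2 hP0
        _ = (2:ℝ) ^ (1+b) * ((1 + -z) ^ (-(1+b)) * (1 + -z) ^ (1+b)) := by
            rw [h3]; ring
        _ = (2:ℝ) ^ (1+b) := by rw [h4, mul_one]
    calc poissonMix p y z * (1 + -z) ^ (1+b)
        ≤ ((M/(y.factorial:ℝ)) * Real.exp (z/2)
            + (M/(y.factorial:ℝ)) * ((1+S) * L)) * (1 + -z) ^ (1+b) :=
          mul_le_mul_of_nonneg_right htot hP0
      _ = (M/(y.factorial:ℝ)) * (Real.exp (z/2) * (1 + -z) ^ (1+b))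
            + (M/(y.factorial:ℝ)) * (1+S) * (L * (1 + -z) ^ (1+b)) := by ring
      _ ≤ (M/(y.factorial:ℝ)) * (η ^ (-(1+b)))
            + (M/(y.factorial:ℝ)) * (1+S) * ((2:ℝ) ^ (1+b)) :=
          add_le_add (mul_le_mul_of_nonneg_left hterm1 (by positivity))
            (mul_le_mul_of_nonneg_left hterm2 (by positivity))
      _ = C2 + C3 := by rw [hC2def, hC3def]
      _ ≤ C1 + C2 + C3 := by linarith
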